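/- Let T : M_d(ℂ) → M_n(ℂ) be an essentially classical-quantum channel, T(ρ) = Σᵢ₌₁ᵏ Tr(Mᵢρ)σᵢ with ‖Mᵢ‖ = 1, and suppose σ₁,...,σ_r (r ≤ k) are exactly the extreme points of Im(T) = hull{σ₁,...,σₖ}. Then there exists a POVM (N₁,...,N_r) with ‖Nᵢ‖ = 1 for all i such that T(ρ) = Σᵢ₌₁ʳ Tr(Nᵢρ)σᵢ. -/

import Mathlib

open Matrix Kronecker BigOperators Filter
open scoped InnerProductSpace ComplexOrder

noncomputable section

/-- `Mat d` is the algebra of `d × d` complex matrices. -/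
abbrev Mat (d : ℕ) := Matrix (Fin d) (Fin d) ℂ

/-- A density matrix: positive semi-definite with unit trace. -/
def IsDensity {m : Type*} [Fintype m] (ρ : Matrix m m ℂ) : Prop :=
  ρ.PosSemidef ∧ ρ.trace = 1

/-- The tensor product `T₁ ⊗ T₂` of two (linear) maps on matrix algebras. -/
def tensorFun {d₁ d₂ n₁ n₂ : ℕ} (T₁ : Mat d₁ → Mat n₁) (T₂ : Mat d₂ → Mat n₂)
    (ρ : Matrix (Fin d₁ × Fin d₂) (Fin d₁ × Fin d₂) ℂ) :
    Matrix (Fin n₁ × Fin n₂) (Fin n₁ × Fin n₂) ℂ :=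
  ∑ i, ∑ j, ∑ k, ∑ l, ρ (i, k) (j, l) •
    (T₁ (Matrix.single i j 1) ⊗ₖ T₂ (Matrix.single k l 1))

/-- A quantum channel: completely positive and trace preserving. -/
def IsChannel {d n : ℕ} (T : Mat d →ₗ[ℂ] Mat n) : Prop :=
  (∀ ρ, (T ρ).trace = ρ.trace) ∧
  ∀ k : ℕ, ∀ ρ : Matrix (Fin d × Fin k) (Fin d × Fin k) ℂ,
    ρ.PosSemidef → (tensorFun (T ·) (id : Mat k → Mat k) ρ).PosSemidef

/-- The image of the set of density matrices under a channel. -/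
def chImage {d n : ℕ} (T : Mat d →ₗ[ℂ] Mat n) : Set (Mat n) :=
  (T ·) '' {ρ | IsDensity ρ}

/-- A POVM: a tuple of positive semi-definite matrices summing to the identity. -/
def IsPOVM {d k : ℕ} (M : Fin k → Mat d) : Prop :=
  (∀ i, (M i).PosSemidef) ∧ ∑ i, M i = 1

/-- The operator norm of a matrix, acting on the Euclidean (ℓ²) space. -/
def opNorm {d : ℕ} (M : Mat d) : ℝ :=
  ‖(Matrix.toEuclideanCLM (𝕜 := ℂ) (n := Fin d)) M‖

/-- A separable bipartite state: a convex combination of tensor products of densities. -/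
def SeparableState {d₁ d₂ : ℕ} (ρ : Matrix (Fin d₁ × Fin d₂) (Fin d₁ × Fin d₂) ℂ) : Prop :=
  ∃ (m : ℕ) (c : Fin m → ℝ) (A : Fin m → Mat d₁) (B : Fin m → Mat d₂),
    (∀ i, 0 ≤ c i) ∧ (∑ i, c i = 1) ∧ (∀ i, IsDensity (A i)) ∧ (∀ i, IsDensity (B i)) ∧
    ρ = ∑ i, (c i : ℂ) • (A i ⊗ₖ B i)

/-- An entanglement breaking channel: `T ⊗ id` maps states to separable states. -/
def IsEntanglementBreaking {d n : ℕ} (T : Mat d →ₗ[ℂ] Mat n) : Prop :=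
  ∀ ρ : Matrix (Fin d × Fin d) (Fin d × Fin d) ℂ, IsDensity ρ →
    SeparableState (tensorFun (T ·) (id : Mat d → Mat d) ρ)

/-- A vertex of a convex set `C`: a point of `C` such that the intersection of all
supporting hyperplanes of `C` at that point is the point itself. -/
def IsVertex {n : ℕ} (C : Set (Mat n)) (x : Mat n) : Prop :=
  x ∈ C ∧ ∀ y : Mat n,
    (∀ f : Mat n →ₗ[ℝ] ℝ, (∀ z ∈ C, f z ≤ f x) → f y = f x) → y = x

/-- An essentially classical-quantum channel: `ρ ↦ ∑ᵢ Tr(Mᵢρ)σᵢ` for a POVM whose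
elements all have operator norm one and density matrices `σᵢ`. -/
def IsEssentiallyCQ {d n : ℕ} (T : Mat d →ₗ[ℂ] Mat n) : Prop :=
  ∃ (k : ℕ) (M : Fin k → Mat d) (σ : Fin k → Mat n),
    IsPOVM M ∧ (∀ i, opNorm (M i) = 1) ∧ (∀ i, IsDensity (σ i)) ∧
    ∀ ρ, T ρ = ∑ i, (M i * ρ).trace • σ i



lemma exists_weights {α : Type*} [AddCommGroup α] [Module ℝ α] {m : ℕ} (f : Fin m → α) {x : α}
    (hx : x ∈ convexHull ℝ (Set.range f)) :
    ∃ w : Fin m → ℝ, (∀ i, 0 ≤ w i) ∧ ∑ i, w i = 1 ∧ ∑ i, w i • f i = x := by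
  rw [convexHull_eq] at hx
  obtain ⟨ι, t, w, z, hw₀, hw₁, hz, hx⟩ := hx
  rw [Finset.centerMass_eq_of_sum_1 _ _ hw₁] at hx
  choose g hg using hz
  refine ⟨fun i => ∑ c ∈ t.attach, if g c.1 c.2 = i then w c.1 else 0, fun i =>
    Finset.sum_nonneg fun c _ => ?_, ?_, ?_⟩
  · split
    · exact hw₀ _ c.2
    · exact le_rfl
  · simp only []
    rw [Finset.sum_comm]
    calc ∑ c ∈ t.attach, ∑ i, (if g c.1 c.2 = i then w c.1 else 0)
        = ∑ c ∈ t.attach, w c.1 := by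
          refine Finset.sum_congr rfl fun c _ => ?_
          simp
      _ = 1 := by rw [Finset.sum_attach]; exact hw₁
  · simp only []
    calc ∑ i, (∑ c ∈ t.attach, if g c.1 c.2 = i then w c.1 else 0) • f i
        = ∑ i, ∑ c ∈ t.attach, (if g c.1 c.2 = i then w c.1 else 0) • f i := by
          simp [Finset.sum_smul]
      _ = ∑ c ∈ t.attach, ∑ i, (if g c.1 c.2 = i then w c.1 else 0) • f i :=
          Finset.sum_comm
      _ = ∑ c ∈ t.attach, w c.1 • z c.1 := by
          refine Finset.sum_congr rfl fun c _ => ?_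
          simp [ite_smul, hg]
      _ = x := (Finset.sum_attach t (fun a => w a • z a)).trans hx



-- PSD matrix gives nonneg CLM
lemma psd_clm_nonneg {d : ℕ} {X : Mat d} (hX : X.PosSemidef) :
    0 ≤ (Matrix.toEuclideanCLM (𝕜 := ℂ) (n := Fin d)) X := by
  rw [ContinuousLinearMap.nonneg_iff_isPositive]
  exact Matrix.isPositive_toEuclideanLin_iff.mpr hX

-- smul of PSD
lemma psd_smul {d : ℕ} {X : Mat d} (hX : X.PosSemidef) {c : ℝ} (hc : 0 ≤ c) :
    ((c : ℂ) • X).PosSemidef := by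
  constructor
  · unfold Matrix.IsHermitian
    rw [Matrix.conjTranspose_smul, hX.1.eq]
    congr 1
    simp
  · intro x
    exact (hX.smul (a := (c : ℂ)) (by exact_mod_cast hc)).2 x

lemma psd_sum {d : ℕ} {ι : Type*} (s : Finset ι) (F : ι → Mat d)
    (h : ∀ j ∈ s, (F j).PosSemidef) : (∑ j ∈ s, F j).PosSemidef := by
  classical
  induction s using Finset.induction with
  | empty => simpa using Matrix.PosSemidef.zero
  | insert _ _ hj ih =>
      rw [Finset.sum_insert hj]
      exact (h _ (Finset.mem_insert_self _ _)).add
        (ih fun j hjs => h j (Finset.mem_insert_of_mem hjs))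

section
attribute [local instance] Matrix.normedAddCommGroup Matrix.normedSpace

lemma hull_eq {n k r : ℕ} (σ : Fin k → Mat n) (hr : r ≤ k)
    (hext : Set.extremePoints ℝ (convexHull ℝ (Set.range σ)) =
      Set.range (fun i : Fin r => σ (Fin.castLE hr i))) :
    convexHull ℝ (Set.range σ) =
      convexHull ℝ (Set.range fun i : Fin r => σ (Fin.castLE hr i)) := by
  have h1 : IsCompact (convexHull ℝ (Set.range σ)) := (Set.finite_range σ).isCompact_convexHull ℝ
  haveI : LocallyConvexSpace ℝ (Mat n) := NormedSpace.toLocallyConvexSpace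
  have h2 := closure_convexHull_extremePoints h1 (convex_convexHull ℝ _)
  rw [hext, ((Set.finite_range _).isCompact_convexHull ℝ).isClosed.closure_eq] at h2
  exact h2.symm

end

lemma opNorm_one_of {d : ℕ} (hd : 0 < d) {A B C D : Mat d} (hB : B.PosSemidef)
    (hC : C.PosSemidef) (hBn : opNorm B = 1) (hab : A = B + C)
    (hD : D.PosSemidef) (hAD : A + D = 1) : opNorm A = 1 := by
  set φ := Matrix.toEuclideanCLM (𝕜 := ℂ) (n := Fin d) with hφ
  haveI : Nonempty (Fin d) := ⟨⟨0, hd⟩⟩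
  haveI : Nontrivial (EuclideanSpace ℂ (Fin d)) := inferInstance
  have hA : A.PosSemidef := hab ▸ hB.add hC
  have h1 : φ B ≤ φ A := by
    rw [ContinuousLinearMap.le_def, ← ContinuousLinearMap.nonneg_iff_isPositive, ← map_sub]
    have : A - B = C := by rw [hab, add_sub_cancel_left]
    exact this ▸ psd_clm_nonneg hC
  have h2 : φ A ≤ 1 := by
    rw [ContinuousLinearMap.le_def, ← ContinuousLinearMap.nonneg_iff_isPositive]
    have : (1 : _ →L[ℂ] _) - φ A = φ D := by
      rw [← map_one φ, ← map_sub]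
      congr 1
      rw [← hAD, add_sub_cancel_left]
    exact this ▸ psd_clm_nonneg hD
  have l1 : ‖φ B‖ ≤ ‖φ A‖ :=
    CStarAlgebra.norm_le_norm_of_nonneg_of_le (psd_clm_nonneg hB) h1
  have l2 : ‖φ A‖ ≤ ‖(1 : EuclideanSpace ℂ (Fin d) →L[ℂ] EuclideanSpace ℂ (Fin d))‖ :=
    CStarAlgebra.norm_le_norm_of_nonneg_of_le (psd_clm_nonneg hA) h2
  rw [norm_one] at l2
  exact le_antisymm l2 (hBn ▸ l1)

lemma real_smul_mat {n : ℕ} (a : ℝ) (X : Mat n) : a • X = (a : ℂ) • X := by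
  ext i j
  simp [Complex.real_smul]

/-- if `T(ρ) = ∑_{i=1}^k Tr(Mᵢρ)σᵢ` is essentially classical-quantum and
`σ₁, …, σ_r` are exactly the extreme points of `Im(T) = hull{σ₁, …, σₖ}`, then `T` admits
a representation `T(ρ) = ∑_{i=1}^r Tr(Nᵢρ)σᵢ` with `(Nᵢ)` a POVM and `‖Nᵢ‖ = 1`. -/
theorem stmt19 {d n k r : ℕ} (T : Mat d →ₗ[ℂ] Mat n)
    (M : Fin k → Mat d) (σ : Fin k → Mat n)
    (hPOVM : IsPOVM M) (hnorm : ∀ i, opNorm (M i) = 1) (hσ : ∀ i, IsDensity (σ i))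
    (hrep : ∀ ρ, T ρ = ∑ i, (M i * ρ).trace • σ i)
    (hr : r ≤ k)
    (hext : Set.extremePoints ℝ (convexHull ℝ (Set.range σ)) =
      Set.range (fun i : Fin r => σ (Fin.castLE hr i))) :
    ∃ N : Fin r → Mat d,
      IsPOVM N ∧ (∀ i, opNorm (N i) = 1) ∧
      ∀ ρ, T ρ = ∑ i, (N i * ρ).trace • σ (Fin.castLE hr i) := by
  classical
  simp only [IsPOVM] at hPOVM ⊢
  classical
  set σ' : Fin r → Mat n := fun i => σ (Fin.castLE hr i) with hσ'
  have hhull := hull_eq σ hr hext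
  have hmem : ∀ j : Fin k, σ j ∈ convexHull ℝ (Set.range σ') := fun j =>
    hhull ▸ subset_convexHull ℝ _ (Set.mem_range_self j)
  choose w hw0 hw1 hw2 using fun j => exists_weights σ' (hmem j)
  set v : Fin k → Fin r → ℝ := fun j i =>
    if h : (j : ℕ) < r then (if i = ⟨j, h⟩ then 1 else 0) else w j i with hv
  have hv0 : ∀ j i, 0 ≤ v j i := by
    intro j i; simp only [hv]; split
    · split <;> norm_num
    · exact hw0 j i
  have hv1 : ∀ j, ∑ i, v j i = 1 := by
    intro j; simp only [hv]; split
    · simp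
    · exact hw1 j
  have hv2 : ∀ j, ∑ i, v j i • σ' i = σ j := by
    intro j; simp only [hv]; split
    · rename_i h
      simp only [ite_smul, one_smul, zero_smul, Finset.sum_ite_eq' Finset.univ,
        Finset.mem_univ, if_true]
      exact congrArg σ (Fin.ext rfl)
    · exact hw2 j
  have hv3 : ∀ i : Fin r, v (Fin.castLE hr i) i = 1 := by
    intro i
    simp only [hv]
    rw [dif_pos (show ((Fin.castLE hr i : Fin k) : ℕ) < r from i.2)]
    exact if_pos (Fin.ext rfl)
  set N : Fin r → Mat d := fun i => ∑ j, ((v j i : ℝ) : ℂ) • M j with hN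
  have hNpsd : ∀ i, (N i).PosSemidef := fun i =>
    psd_sum _ _ fun j _ => psd_smul (hPOVM.1 j) (hv0 j i)
  have hNsum : ∑ i, N i = 1 := by
    rw [hN, Finset.sum_comm]
    calc ∑ j, ∑ i, ((v j i : ℝ) : ℂ) • M j
        = ∑ j, M j := by
          refine Finset.sum_congr rfl fun j _ => ?_
          have h1 : (∑ i, ((v j i : ℝ) : ℂ)) = 1 := by
            rw [← Complex.ofReal_sum, hv1 j, Complex.ofReal_one]
          rw [← Finset.sum_smul, h1, one_smul]
      _ = 1 := hPOVM.2
  refine ⟨N, ⟨hNpsd, hNsum⟩, ?_, ?_⟩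
  · intro i
    rcases Nat.eq_zero_or_pos d with hd | hd
    · exfalso
      subst hd
      have h0 : M (Fin.castLE hr i) = 0 := by ext a b; exact a.elim0
      have h1 := hnorm (Fin.castLE hr i)
      rw [h0] at h1
      unfold opNorm at h1
      rw [map_zero, norm_zero] at h1
      exact zero_ne_one h1
    · set c : Fin k := Fin.castLE hr i with hc
      refine opNorm_one_of hd (hPOVM.1 c)
        (psd_sum (Finset.univ.erase c) _ fun j _ => psd_smul (hPOVM.1 j) (hv0 j i))
        (hnorm c) ?_
        (psd_sum (Finset.univ.erase i) N fun i' _ => hNpsd i') ?_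
      · show ∑ j, ((v j i : ℝ) : ℂ) • M j = M c + ∑ j ∈ Finset.univ.erase c, ((v j i : ℝ) : ℂ) • M j
        have hvc : ((v c i : ℝ) : ℂ) = 1 := by rw [hc, hv3 i, Complex.ofReal_one]
        rw [← Finset.add_sum_erase Finset.univ (fun j => ((v j i : ℝ) : ℂ) • M j)
          (Finset.mem_univ c), hvc, one_smul]
      · rw [← hNsum, ← Finset.add_sum_erase Finset.univ N (Finset.mem_univ i)]
  · intro ρ
    rw [hrep]
    set cf : Fin k → ℂ := fun j => (M j * ρ).trace with hcf
    calc ∑ j, cf j • σ j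
        = ∑ j, ∑ i, ((v j i : ℂ) * cf j) • σ' i := by
          refine Finset.sum_congr rfl fun j _ => ?_
          rw [← hv2 j, Finset.smul_sum]
          refine Finset.sum_congr rfl fun i _ => ?_
          rw [real_smul_mat, smul_smul, mul_comm]
      _ = ∑ i, ∑ j, ((v j i : ℂ) * cf j) • σ' i := Finset.sum_comm
      _ = ∑ i, (N i * ρ).trace • σ' i := by
          refine Finset.sum_congr rfl fun i _ => ?_
          have h2 : (N i * ρ).trace = ∑ j, (v j i : ℂ) * cf j := by
            rw [hN, Matrix.sum_mul, Matrix.trace_sum]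
            refine Finset.sum_congr rfl fun j _ => ?_
            rw [Matrix.smul_mul, Matrix.trace_smul, smul_eq_mul]
          rw [h2, Finset.sum_smul]
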